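/- arXiv:0904.2632 — 5 statements merged into one kernel-verified Lean document; each statement's English description precedes it below -/
import Mathlib

section
/- Let L be a polytope in ℝⁿ, G an affine subspace of ℝⁿ with direction G₀, and x ∈ L ∩ G. Then the orthogonal projection onto G₀ of the normal cone N(L,x) equals the normal cone of L ∩ G at x taken relative to G: P_{G₀} N(L,x) = N_G(L ∩ G, x). -/
open scoped RealInnerProductSpace
noncomputable section

section Aux
variable {E : Type*} [NormedAddCommGroup E] [NormedSpace ℝ E] [FiniteDimensional ℝ E]

def coneSet {ι : Type*} [Fintype ι] (v : ι → E) : Set E :=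
  {y | ∃ lam : ι → ℝ, (∀ i, 0 ≤ lam i) ∧ ∑ i, lam i • v i = y}

lemma isClosed_coneSet_of_linearIndependent {ι : Type*} [Fintype ι] {v : ι → E}
    (hv : LinearIndependent ℝ v) : IsClosed (coneSet v) := by
  classical
  let g : (ι → ℝ) →ₗ[ℝ] E :=
    { toFun := fun lam => ∑ i, lam i • v i
      map_add' := by intro a b; simp [add_smul, Finset.sum_add_distrib]
      map_smul' := by intro c a; simp [Finset.smul_sum, smul_smul] }
  have hker : LinearMap.ker g = ⊥ := by
    rw [LinearMap.ker_eq_bot']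
    intro m hm
    funext i
    exact Fintype.linearIndependent_iff.1 hv m hm i
  have hce := g.isClosedEmbedding_of_injective hker
  have horth : IsClosed {lam : ι → ℝ | ∀ i, 0 ≤ lam i} := by
    have : {lam : ι → ℝ | ∀ i, 0 ≤ lam i} = ⋂ i, {lam | 0 ≤ lam i} := by
      ext lam; simp
    rw [this]
    exact isClosed_iInter fun i => isClosed_le continuous_const (continuous_apply i)
  have : coneSet v = g '' {lam : ι → ℝ | ∀ i, 0 ≤ lam i} := by
    ext y
    constructor
    · rintro ⟨lam, h0, hs⟩; exact ⟨lam, h0, hs⟩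
    · rintro ⟨lam, h0, hs⟩; exact ⟨lam, h0, hs⟩
  rw [this]
  exact hce.isClosedMap _ horth

/-- cone over terms of `v` indexed by a finset -/
def coneSetF {ι : Type*} (t : Finset ι) (v : ι → E) : Set E :=
  {y | ∃ lam : ι → ℝ, (∀ i, 0 ≤ lam i) ∧ ∑ i ∈ t, lam i • v i = y}

lemma coneSetF_eq {ι : Type*} (t : Finset ι) (v : ι → E) [DecidableEq ι] :
    coneSetF t v = coneSet (fun i : {x // x ∈ t} => v i) := by
  ext y
  constructor
  · rintro ⟨lam, h0, hs⟩
    refine ⟨fun i => lam i, fun i => h0 i, ?_⟩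
    rw [Finset.univ_eq_attach]
    rw [← hs]
    exact Finset.sum_attach t (fun i => lam i • v i)
  · rintro ⟨lam, h0, hs⟩
    refine ⟨fun i => if h : i ∈ t then lam ⟨i, h⟩ else 0, ?_, ?_⟩
    · intro i; by_cases h : i ∈ t <;> simp [h, h0]
    · rw [← hs, Finset.univ_eq_attach, ← Finset.sum_attach t]
      apply Finset.sum_congr rfl
      intro i _
      simp [i.2]

lemma isClosed_coneSetF_aux {ι : Type*} (m : ℕ) :
    ∀ (t : Finset ι) (v : ι → E), t.card ≤ m → IsClosed (coneSetF t v) := by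
  classical
  induction m with
  | zero =>
    intro t v hcard
    rw [Finset.card_eq_zero.1 (Nat.le_zero.1 hcard), coneSetF_eq]
    haveI : IsEmpty {x // x ∈ (∅ : Finset ι)} := by
      constructor; rintro ⟨x, hx⟩; exact absurd hx (Finset.notMem_empty x)
    exact isClosed_coneSet_of_linearIndependent linearIndependent_empty_type
  | succ m ih =>
    intro t v hcard
    by_cases hli : LinearIndependent ℝ (fun i : {x // x ∈ t} => v i)
    · rw [coneSetF_eq]; exact isClosed_coneSet_of_linearIndependent hli
    · obtain ⟨c₀, hc₀sum, j₀, hj₀⟩ := Fintype.not_linearIndependent_iff.1 hli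
      -- extend to a function on ι with a positive entry somewhere in t
      obtain ⟨c, hcsum, hczero, j₁, hj₁t, hj₁⟩ :
          ∃ c : ι → ℝ, (∑ i ∈ t, c i • v i = 0) ∧ (∀ i ∉ t, c i = 0) ∧
            ∃ j ∈ t, 0 < c j := by
        have hext : ∀ (d : {x // x ∈ t} → ℝ), (∑ i, d i • v i = 0) →
            ∑ i ∈ t, (if h : i ∈ t then d ⟨i, h⟩ else 0) • v i = 0 := by
          intro d hd
          rw [← Finset.sum_attach t, ← Finset.univ_eq_attach (s := t)]
          rw [← hd]
          apply Finset.sum_congr rfl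
          intro i _
          simp [i.2]
        rcases lt_or_gt_of_ne hj₀ with h | h
        · refine ⟨fun i => if h : i ∈ t then (-c₀) ⟨i, h⟩ else 0,
            hext (-c₀) (by simpa using hc₀sum), fun i hi => dif_neg hi, j₀, j₀.2, ?_⟩
          simp only [j₀.2, dif_pos]
          simpa using h
        · exact ⟨fun i => if h : i ∈ t then c₀ ⟨i, h⟩ else 0,
            hext c₀ hc₀sum, fun i hi => dif_neg hi, j₀, j₀.2,
            by simp only [j₀.2, dif_pos]; exact h⟩
      set T : Finset ι := t.filter (fun i => 0 < c i) with hT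
      have hj₁T : j₁ ∈ T := by simp [hT, hj₁, hj₁t]
      have key : coneSetF t v = ⋃ j ∈ (T : Set ι), coneSetF (t.erase j) v := by
        ext y
        constructor
        · rintro ⟨lam, h0, hsum⟩
          obtain ⟨j, hjT, hjmin⟩ :=
            T.exists_min_image (fun i => lam i / c i) ⟨j₁, hj₁T⟩
          have hjt : j ∈ t := (Finset.mem_filter.1 hjT).1
          have hcj : 0 < c j := (Finset.mem_filter.1 hjT).2
          set τ := lam j / c j with hτ
          have hτ0 : 0 ≤ τ := div_nonneg (h0 j) hcj.le
          set lam2 : ι → ℝ := fun i => lam i - τ * c i with hlam2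
          have hlam2nn : ∀ i, 0 ≤ lam2 i := by
            intro i
            rcases le_or_gt (c i) 0 with h | h
            · have : τ * c i ≤ 0 := mul_nonpos_of_nonneg_of_nonpos hτ0 h
              simp only [hlam2]; linarith [h0 i]
            · by_cases hit : i ∈ t
              · have hiT : i ∈ T := Finset.mem_filter.2 ⟨hit, h⟩
                have h1 := hjmin i hiT
                have h2 : τ * c i ≤ lam i := (le_div_iff₀ h).1 h1
                simp only [hlam2]; linarith
              · exact absurd (hczero i hit) (ne_of_gt h)
          have hlam2j : lam2 j = 0 := by
            simp only [hlam2, hτ]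
            field_simp
            ring
          have hsum2 : ∑ i ∈ t, lam2 i • v i = y := by
            have : ∑ i ∈ t, lam2 i • v i
                = ∑ i ∈ t, lam i • v i - τ • ∑ i ∈ t, c i • v i := by
              rw [Finset.smul_sum, ← Finset.sum_sub_distrib]
              apply Finset.sum_congr rfl
              intro i _
              simp [hlam2, sub_smul, mul_smul]
            rw [this, hcsum, smul_zero, sub_zero, hsum]
          refine Set.mem_biUnion hjT ⟨lam2, hlam2nn, ?_⟩
          rw [← hsum2, ← Finset.add_sum_erase _ _ hjt, hlam2j, zero_smul, zero_add]
        · intro hy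
          obtain ⟨j, hjT, lam, h0, hsum⟩ := by
            simpa only [Set.mem_iUnion] using hy
          have hjt : j ∈ t := (Finset.mem_filter.1 hjT).1
          refine ⟨fun i => if i = j then 0 else lam i, ?_, ?_⟩
          · intro i; by_cases h : i = j <;> simp [h, h0]
          · rw [← Finset.add_sum_erase _ _ hjt]
            simp only []
            rw [if_pos trivial, zero_smul, zero_add, ← hsum]
            apply Finset.sum_congr rfl
            intro i hi
            rw [if_neg (Finset.ne_of_mem_erase hi)]
      rw [key]
      refine Set.Finite.isClosed_biUnion (T : Set ι).toFinite ?_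
      intro j hj
      refine ih _ _ ?_
      have hjT2 : j ∈ T := by simpa using hj
      have hjt : j ∈ t := (Finset.mem_filter.1 (hT ▸ hjT2)).1
      have := Finset.card_erase_of_mem hjt
      omega

lemma isClosed_coneSetF {ι : Type*} (t : Finset ι) (v : ι → E) : IsClosed (coneSetF t v) :=
  isClosed_coneSetF_aux t.card t v le_rfl


lemma isClosed_submodule_add_cone (W : Submodule ℝ E) {ι : Type*} [Fintype ι] (v : ι → E) :
    IsClosed {y : E | ∃ w ∈ W, ∃ lam : ι → ℝ, (∀ i, 0 ≤ lam i) ∧ w + ∑ i, lam i • v i = y} := by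
  classical
  set d := Module.finrank ℝ W with hd
  let b : Module.Basis (Fin d) ℝ W := Module.finBasis ℝ W
  let u : (Fin d ⊕ Fin d) ⊕ ι → E :=
    Sum.elim (Sum.elim (fun j => (b j : E)) (fun j => -(b j : E))) v
  have key : {y : E | ∃ w ∈ W, ∃ lam : ι → ℝ, (∀ i, 0 ≤ lam i) ∧ w + ∑ i, lam i • v i = y}
      = coneSetF Finset.univ u := by
    ext y
    constructor
    · rintro ⟨w, hw, lam, h0, hsum⟩
      set r : Fin d → ℝ := fun j => b.repr ⟨w, hw⟩ j with hr
      refine ⟨Sum.elim (Sum.elim (fun j => max (r j) 0) (fun j => max (-(r j)) 0)) lam,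
        ?_, ?_⟩
      · rintro ((j | j) | i)
        · exact le_max_right _ _
        · exact le_max_right _ _
        · exact h0 i
      · rw [Fintype.sum_sum_type, Fintype.sum_sum_type]
        have e1 : ∑ j, (max (r j) 0) • u (Sum.inl (Sum.inl j))
            + ∑ j, (max (-(r j)) 0) • u (Sum.inl (Sum.inr j)) = w := by
          simp only [u, Sum.elim_inl, Sum.elim_inr, smul_neg]
          rw [← Finset.sum_add_distrib]
          have : ∀ j, (max (r j) 0) • (b j : E) + -((max (-(r j)) 0) • (b j : E))
              = r j • (b j : E) := by
            intro j
            rw [← sub_eq_add_neg, ← sub_smul, max_zero_sub_max_neg_zero_eq_self]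
          rw [Finset.sum_congr rfl fun j _ => this j]
          have := b.sum_repr ⟨w, hw⟩
          calc ∑ j, r j • (b j : E) = ((∑ j, r j • b j : W) : E) := by
                push_cast [hr]; rfl
            _ = w := by rw [this]
        simp only [Sum.elim_inl, Sum.elim_inr] at e1 ⊢
        rw [e1] at *
        exact hsum
    · rintro ⟨lam, h0, hsum⟩
      refine ⟨∑ j, (lam (Sum.inl (Sum.inl j)) - lam (Sum.inl (Sum.inr j))) • (b j : E), ?_,
        fun i => lam (Sum.inr i), fun i => h0 _, ?_⟩
      · exact Submodule.sum_mem _ fun j _ =>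
          Submodule.smul_mem _ _ (SetLike.coe_mem (b j))
      · rw [← hsum, Fintype.sum_sum_type, Fintype.sum_sum_type]
        have e1 : ∑ j, lam (Sum.inl (Sum.inl j)) • u (Sum.inl (Sum.inl j))
            = ∑ j, lam (Sum.inl (Sum.inl j)) • (b j : E) :=
          Finset.sum_congr rfl fun j _ => by simp [u]
        have e2 : ∑ j, lam (Sum.inl (Sum.inr j)) • u (Sum.inl (Sum.inr j))
            = -∑ j, lam (Sum.inl (Sum.inr j)) • (b j : E) := by
          rw [← Finset.sum_neg_distrib]
          exact Finset.sum_congr rfl fun j _ => by simp [u]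
        have e3 : ∑ i, lam (Sum.inr i) • u (Sum.inr i) = ∑ i, lam (Sum.inr i) • v i :=
          Finset.sum_congr rfl fun i _ => by simp [u]
        rw [e1, e2, e3]
        simp only [sub_smul]
        rw [Finset.sum_sub_distrib]
        abel
  rw [key]
  exact (isClosed_coneSetF Finset.univ u)

end Aux

section Farkas
variable {E : Type*} [NormedAddCommGroup E] [InnerProductSpace ℝ E] [FiniteDimensional ℝ E]

lemma farkas_ineq {ι : Type*} [Fintype ι] [DecidableEq ι] (q : ι → E) (c : ι → ℝ)
    (hstar : ∀ lam : ι → ℝ, (∀ i, 0 ≤ lam i) → ∑ i, lam i • q i = 0 →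
      ∑ i, lam i * c i ≤ 0) :
    ∃ w : E, ∀ i, ⟪q i, w⟫ + c i ≤ 0 := by
  classical
  haveI : CompleteSpace (EuclideanSpace ℝ ι) :=
    FiniteDimensional.complete ℝ (EuclideanSpace ℝ ι)
  let A : E →ₗ[ℝ] (EuclideanSpace ℝ ι) :=
    { toFun := fun w => WithLp.toLp 2 (fun i => ⟪q i, w⟫)
      map_add' := by intro a b; ext i; exact inner_add_right _ _ _
      map_smul' := by intro m a; ext i; exact real_inner_smul_right _ _ m }
  let v : ι → EuclideanSpace ℝ ι := fun i => EuclideanSpace.single i (1 : ℝ)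
  let S : Set (EuclideanSpace ℝ ι) := {y : EuclideanSpace ℝ ι | ∃ w ∈ LinearMap.range A, ∃ lam : ι → ℝ,
    (∀ i, 0 ≤ lam i) ∧ w + ∑ i, lam i • v i = y}
  have hSclosed : IsClosed S := isClosed_submodule_add_cone _ v
  -- S as a convex cone
  let K : ConvexCone ℝ (EuclideanSpace ℝ ι) :=
    { carrier := S
      smul_mem' := by
        rintro t ht y ⟨w, hw, lam, h0, hsum⟩
        refine ⟨t • w, Submodule.smul_mem _ _ hw, fun i => t * lam i,
          fun i => mul_nonneg ht.le (h0 i), ?_⟩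
        rw [← hsum, smul_add, Finset.smul_sum]
        congr 1
        exact Finset.sum_congr rfl fun i _ => (smul_smul t (lam i) (v i)).symm
      add_mem' := by
        rintro y ⟨w, hw, lam, h0, hsum⟩ y' ⟨w', hw', lam', h0', hsum'⟩
        refine ⟨w + w', Submodule.add_mem _ hw hw', fun i => lam i + lam' i,
          fun i => add_nonneg (h0 i) (h0' i), ?_⟩
        rw [← hsum, ← hsum']
        simp only [add_smul]
        rw [Finset.sum_add_distrib]
        abel }
  have hSne : S.Nonempty := ⟨0, 0, Submodule.zero_mem _, 0, fun i => le_rfl, by simp⟩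
  have hsingle_sum : ∀ r : ι → ℝ, ∀ i, (∑ j, r j • v j) i = r i := by
    intro r i
    rw [WithLp.ofLp_sum, Finset.sum_apply]
    simp [v, EuclideanSpace.single_apply]
  have hb : WithLp.toLp 2 (fun i => -c i : ι → ℝ) ∈ K := by
    by_contra hnb
    obtain ⟨y, hy1, hy2⟩ :=
      ProperCone.hyperplane_separation'
        (⟨K.toPointedCone ⟨0, Submodule.zero_mem _, 0, fun i => le_rfl, by simp⟩, hSclosed⟩ :
          ProperCone ℝ (EuclideanSpace ℝ ι)) (fun h => hnb h)
    have hyi : ∀ i, 0 ≤ y i := by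
      intro i
      have hmem : (v i) ∈ K := by
        refine ⟨0, Submodule.zero_mem _, fun j => if j = i then 1 else 0,
          fun j => by positivity, ?_⟩
        rw [zero_add]
        simp [ite_smul]
      have := hy1 _ hmem
      have hv : ⟪v i, y⟫ = y i := by
        simp [v, EuclideanSpace.inner_single_left]
      rwa [hv] at this
    have hAinner : ∀ w : E, ⟪(A w : EuclideanSpace ℝ ι), y⟫ = ∑ i, ⟪q i, w⟫ * y i := by
      intro w
      rw [PiLp.inner_apply]
      apply Finset.sum_congr rfl
      intro j _
      simp [A, RCLike.inner_apply, conj_trivial]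
      ring
    have hAmem : ∀ w : E, (A w : EuclideanSpace ℝ ι) ∈ K := fun w =>
      ⟨A w, LinearMap.mem_range_self _ _, 0, fun i => le_rfl, by simp⟩
    have hQ : (∑ i, y i • q i) = 0 := by
      have h1 : ∀ w : E, ⟪∑ i, y i • q i, w⟫ = ⟪(A w : EuclideanSpace ℝ ι), y⟫ := by
        intro w
        rw [sum_inner, hAinner]
        apply Finset.sum_congr rfl
        intro i _
        rw [real_inner_smul_left]
        ring
      have h2 : ∀ w : E, ⟪∑ i, y i • q i, w⟫ = 0 := by
        intro w
        have ha := hy1 _ (hAmem w)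
        have hb := hy1 _ (hAmem (-w))
        rw [← h1 w] at ha
        rw [← h1 (-w), inner_neg_right] at hb
        linarith
      have := h2 (∑ i, y i • q i)
      rwa [real_inner_self_eq_norm_sq, pow_eq_zero_iff (by norm_num), norm_eq_zero] at this
    have hyc := hstar (fun i => y i) hyi hQ
    have hyb : ⟪y, WithLp.toLp 2 (fun i => -c i : ι → ℝ)⟫ = -∑ i, y i * c i := by
      rw [PiLp.inner_apply, ← Finset.sum_neg_distrib]
      apply Finset.sum_congr rfl
      intro i _
      simp [RCLike.inner_apply, conj_trivial]
      ring
    rw [real_inner_comm, hyb] at hy2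
    linarith
  obtain ⟨w', ⟨w, rfl⟩, r, hr0, hsum⟩ := hb
  refine ⟨w, fun i => ?_⟩
  have h := congrFun (congrArg (fun z : EuclideanSpace ℝ ι => (z : ι → ℝ)) hsum) i
  have h2 : (A w + ∑ j, r j • v j) i = ⟪q i, w⟫ + (∑ j, r j • v j) i := rfl
  have h4 := hsingle_sum r i
  have h5 : ⟪q i, w⟫ + r i = -c i := by
    rw [← h4, ← h2]
    exact h
  have hri := hr0 i
  linarith

end Farkas
theorem projection_of_normalCone
    (n : ℕ) (s : Finset (EuclideanSpace ℝ (Fin n)))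
    (G : AffineSubspace ℝ (EuclideanSpace ℝ (Fin n)))
    (L : Set (EuclideanSpace ℝ (Fin n))) (hL : L = convexHull ℝ (↑s : Set (EuclideanSpace ℝ (Fin n))))
    (x : EuclideanSpace ℝ (Fin n)) (hx : x ∈ L ∩ (G : Set (EuclideanSpace ℝ (Fin n)))) :
    (fun z => (Submodule.orthogonalProjectionOnto G.direction z : EuclideanSpace ℝ (Fin n))) ''
        {u | ∀ z ∈ L, ⟪z - x, u⟫ ≤ 0}
      = {u | u ∈ G.direction ∧ ∀ z ∈ L ∩ (G : Set (EuclideanSpace ℝ (Fin n))), ⟪z - x, u⟫ ≤ 0} := by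
  classical
  ext u
  constructor
  · rintro ⟨vv, hvv, rfl⟩
    refine ⟨SetLike.coe_mem _, ?_⟩
    rintro z ⟨hzL, hzG⟩
    have hzx : z - x ∈ G.direction := by
      have := AffineSubspace.vsub_mem_direction hzG hx.2
      rwa [vsub_eq_sub] at this
    have h1 : ⟪z - x, (Submodule.orthogonalProjectionOnto G.direction vv : EuclideanSpace ℝ (Fin n))⟫
        = ⟪(Submodule.orthogonalProjectionOnto G.direction (z - x) : EuclideanSpace ℝ (Fin n)), vv⟫ :=
      (Submodule.inner_starProjection_left_eq_right _ _ _).symm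
    rw [h1, Submodule.coe_orthogonalProjectionOnto_apply, Submodule.starProjection_eq_self_iff.2 hzx]
    exact hvv z hzL
  · rintro ⟨huG, hrel⟩
    set q : ↥s → EuclideanSpace ℝ (Fin n) := fun p => ((p : EuclideanSpace ℝ (Fin n)) - x)
      - (Submodule.orthogonalProjectionOnto G.direction ((p : EuclideanSpace ℝ (Fin n)) - x)
        : EuclideanSpace ℝ (Fin n)) with hq
    set c : ↥s → ℝ := fun p => ⟪(p : EuclideanSpace ℝ (Fin n)) - x, u⟫ with hc
    have hqperp : ∀ p, q p ∈ G.directionᗮ :=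
      fun p => Submodule.sub_starProjection_mem_orthogonal _
    have hdecomp : ∀ p : ↥s, (p : EuclideanSpace ℝ (Fin n)) - x
        = (Submodule.orthogonalProjectionOnto G.direction ((p : EuclideanSpace ℝ (Fin n)) - x)
          : EuclideanSpace ℝ (Fin n)) + q p := by
      intro p; simp [hq]
    have hstar : ∀ lam : ↥s → ℝ, (∀ i, 0 ≤ lam i) → ∑ i, lam i • q i = 0 →
        ∑ i, lam i * c i ≤ 0 := by
      intro lam h0 hsum
      rcases eq_or_lt_of_le (Finset.sum_nonneg fun i (_ : i ∈ Finset.univ) => h0 i) with h | h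
      · have hz : ∀ i ∈ Finset.univ, lam i = 0 :=
          (Finset.sum_eq_zero_iff_of_nonneg fun i _ => h0 i).1 h.symm
        have he : ∀ i ∈ Finset.univ, lam i * c i = 0 := fun i hi => by rw [hz i hi, zero_mul]
        rw [Finset.sum_congr rfl he]
        simp
      · set t := ∑ i, lam i with ht
        set z := Finset.univ.centerMass lam (fun p : ↥s => (p : EuclideanSpace ℝ (Fin n)))
          with hzdef
        have hzhull : z ∈ convexHull ℝ (↑s : Set (EuclideanSpace ℝ (Fin n))) :=
          Finset.centerMass_mem_convexHull _ (fun i _ => h0 i) h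
            (fun i _ => Finset.mem_coe.2 i.2)
        have hsum1 : z - x = t⁻¹ • ∑ i, lam i • ((i : EuclideanSpace ℝ (Fin n)) - x) := by
          rw [hzdef, Finset.centerMass]
          rw [Finset.sum_congr rfl
              (fun i (_ : i ∈ Finset.univ) =>
                smul_sub (lam i) ((i : EuclideanSpace ℝ (Fin n))) x),
            Finset.sum_sub_distrib, smul_sub, ← Finset.sum_smul]
          congr 1
          rw [smul_smul, inv_mul_cancel₀ (ne_of_gt h), one_smul]
        have hdir : z - x ∈ G.direction := by
          rw [hsum1]
          refine Submodule.smul_mem _ _ ?_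
          have hsplit : ∑ i, lam i • ((i : EuclideanSpace ℝ (Fin n)) - x)
              = ∑ i, lam i • (Submodule.orthogonalProjectionOnto G.direction
                  ((i : EuclideanSpace ℝ (Fin n)) - x) : EuclideanSpace ℝ (Fin n))
                + ∑ i, lam i • q i := by
            rw [← Finset.sum_add_distrib]
            exact Finset.sum_congr rfl fun i _ => by rw [← smul_add, ← hdecomp i]
          rw [hsplit, hsum, add_zero]
          exact Submodule.sum_mem _ fun i _ => Submodule.smul_mem _ _ (SetLike.coe_mem _)
        have hzG : z ∈ G := by
          have := AffineSubspace.vadd_mem_of_mem_direction hdir hx.2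
          rwa [vadd_eq_add, sub_add_cancel] at this
        have hzL : z ∈ L := hL ▸ hzhull
        have hin := hrel z ⟨hzL, hzG⟩
        have hcomp : ⟪z - x, u⟫ = t⁻¹ * ∑ i, lam i * c i := by
          rw [hsum1, real_inner_smul_left, sum_inner]
          congr 1
          exact Finset.sum_congr rfl fun i _ => by rw [real_inner_smul_left]
        rw [hcomp] at hin
        by_contra hcon
        push_neg at hcon
        have := mul_pos (inv_pos.2 h) hcon
        linarith
    obtain ⟨w, hw⟩ := farkas_ineq q c hstar
    set w' := w - (Submodule.orthogonalProjectionOnto G.direction w : EuclideanSpace ℝ (Fin n)) with hw'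
    have hw'perp : w' ∈ G.directionᗮ := Submodule.sub_starProjection_mem_orthogonal _
    refine ⟨u + w', ?_, ?_⟩
    · intro z hzL
      rw [hL] at hzL
      have hhalf : convexHull ℝ (↑s : Set (EuclideanSpace ℝ (Fin n)))
          ⊆ {z : EuclideanSpace ℝ (Fin n) | ⟪z - x, u + w'⟫ ≤ 0} := by
        apply convexHull_min
        · rintro p hp
          have hps : p ∈ s := Finset.mem_coe.1 hp
          set pp : ↥s := ⟨p, hps⟩ with hpp
          show ⟪p - x, u + w'⟫ ≤ 0
          have e0 : p - x = (pp : EuclideanSpace ℝ (Fin n)) - x := rfl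
          have e1 : ⟪(Submodule.orthogonalProjectionOnto G.direction
              ((pp : EuclideanSpace ℝ (Fin n)) - x) : EuclideanSpace ℝ (Fin n)), w'⟫ = 0 :=
            (Submodule.mem_orthogonal _ w').1 hw'perp _ (SetLike.coe_mem _)
          have e2 : ⟪q pp, w'⟫ = ⟪q pp, w⟫ := by
            rw [hw', inner_sub_right]
            have : ⟪q pp, (Submodule.orthogonalProjectionOnto G.direction w
                : EuclideanSpace ℝ (Fin n))⟫ = 0 := by
              rw [real_inner_comm]
              exact (Submodule.mem_orthogonal _ (q pp)).1 (hqperp pp) _ (SetLike.coe_mem _)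
            rw [this, sub_zero]
          have e3 : ⟪(pp : EuclideanSpace ℝ (Fin n)) - x, u⟫ = c pp := rfl
          have hwpp := hw pp
          rw [e0, inner_add_right, hdecomp pp, inner_add_left, inner_add_left, e1, e2]
          rw [hdecomp pp, inner_add_left] at e3
          linarith
        · have hcvx := convex_halfSpace_le
            (f := fun z : EuclideanSpace ℝ (Fin n) => ⟪z, u + w'⟫)
            ⟨fun a b => inner_add_left a b (u + w'), fun r a => real_inner_smul_left a (u + w') r⟩
            ⟪x, u + w'⟫
          have hset : {z : EuclideanSpace ℝ (Fin n) | ⟪z - x, u + w'⟫ ≤ 0}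
              = {z : EuclideanSpace ℝ (Fin n) | ⟪z, u + w'⟫ ≤ ⟪x, u + w'⟫} := by
            ext z
            rw [Set.mem_setOf_eq, Set.mem_setOf_eq, inner_sub_left, sub_nonpos]
          rw [hset]
          exact hcvx
      exact hhalf hzL
    · show (Submodule.orthogonalProjectionOnto G.direction (u + w') : EuclideanSpace ℝ (Fin n)) = u
      rw [map_add]
      rw [Submodule.coe_add, Submodule.orthogonalProjectionOnto_apply_of_mem_orthogonal hw'perp,
        Submodule.coe_orthogonalProjectionOnto_apply, Submodule.starProjection_eq_self_iff.2 huG]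
      simp
end
end

section
/- For a convex set K in ℝⁿ and a point x ∈ K, the polar cone of the normal cone N(K,x) equals the closure of the cone of feasible directions: N(K,x)^* = closure(⋃_{λ>0} λ(K - x)). -/
open scoped RealInnerProductSpace
noncomputable section

theorem polar_normalCone_eq_closure_cone_of_feasible_directions
    (n : ℕ) (K : Set (EuclideanSpace ℝ (Fin n))) (hK : Convex ℝ K)
    (x : EuclideanSpace ℝ (Fin n)) (hx : x ∈ K) :
    {y | ∀ u ∈ {u : EuclideanSpace ℝ (Fin n) | ∀ z ∈ K, ⟪z - x, u⟫ ≤ 0}, ⟪u, y⟫ ≤ 0}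
      = closure (⋃ (l : ℝ) (_ : 0 < l), (fun z => l • (z - x)) '' K) := by
  let E := EuclideanSpace ℝ (Fin n)
  set S : Set E := ⋃ (l : ℝ) (_ : 0 < l), (fun z => l • (z - x)) '' K with hS
  have hmemS : ∀ u : E, u ∈ S ↔ ∃ l : ℝ, 0 < l ∧ ∃ z ∈ K, l • (z - x) = u := by
    intro u
    simp [hS, Set.mem_iUnion, Set.mem_image, eq_comm]
    exact Iff.rfl
  -- S is a convex cone
  have hs : Convex ℝ ((fun z : E => z - x) '' K) := by
    have h := hK.translate (-x)
    simpa only [sub_eq_neg_add] using h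
  have hScone : S = (hs.toCone _ : Set E) := by
    ext u
    rw [hmemS, SetLike.mem_coe, Convex.mem_toCone]
    constructor
    · rintro ⟨l, hl, z, hz, rfl⟩
      exact ⟨l, hl, z - x, ⟨z, hz, rfl⟩, rfl⟩
    · rintro ⟨c, hc, y, ⟨z, hz, rfl⟩, rfl⟩
      exact ⟨c, hc, z, hz, rfl⟩
  set T : ConvexCone ℝ E := (hs.toCone _).closure with hT
  have hTcoe : (T : Set E) = closure S := by rw [hT, ConvexCone.coe_closure, hScone]
  have h0S : (0 : E) ∈ S := (hmemS 0).2 ⟨1, one_pos, x, hx, by simp⟩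
  have hTne : ((T : Set E)).Nonempty := ⟨0, hTcoe ▸ subset_closure h0S⟩
  have hTclosed : IsClosed (T : Set E) := by rw [hTcoe]; exact isClosed_closure
  have hT0 : (0 : E) ∈ T := by rw [← SetLike.mem_coe, hTcoe]; exact subset_closure h0S
  let C : ProperCone ℝ E :=
    { carrier := T
      add_mem' := fun ha hb => T.add_mem ha hb
      zero_mem' := hT0
      smul_mem' := fun c y hy => by
        obtain ⟨c, hc⟩ := c
        rcases hc.eq_or_lt with rfl | hc
        · show (0 : ℝ) • y ∈ T
          simpa using hT0
        · exact T.smul_mem hc hy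
      isClosed' := hTclosed }
  have hbipolar : ((ProperCone.innerDual ((ProperCone.innerDual (T : Set E)) : Set E)) : Set E)
      = T := congrArg (fun D : ProperCone ℝ E => (D : Set E)) (ProperCone.innerDual_innerDual C)
  -- key characterization
  have hkey : ∀ u : E, (∀ z ∈ K, ⟪z - x, u⟫ ≤ 0) ↔ -u ∈ ProperCone.innerDual (T : Set E) := by
    intro u
    constructor
    · intro h v hv
      rw [hTcoe] at hv
      have hsub : S ⊆ {v : E | 0 ≤ ⟪v, -u⟫} := by
        intro w hw
        obtain ⟨l, hl, z, hz, rfl⟩ := (hmemS w).1 hw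
        have := h z hz
        simp only [Set.mem_setOf_eq]
        rw [real_inner_smul_left, inner_neg_right]
        nlinarith
      have hclosed : IsClosed {v : E | 0 ≤ ⟪v, -u⟫} :=
        isClosed_le continuous_const (continuous_id.inner continuous_const)
      exact closure_minimal hsub hclosed hv
    · intro h z hz
      have hzS : z - x ∈ S := (hmemS _).2 ⟨1, one_pos, z, hz, by simp⟩
      have := (ProperCone.mem_innerDual.1 h) (x := z - x) (hTcoe ▸ subset_closure hzS)
      rw [inner_neg_right] at this
      linarith
  ext y
  simp only [Set.mem_setOf_eq]
  rw [← hTcoe, ← hbipolar]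
  rw [SetLike.mem_coe, ProperCone.mem_innerDual]
  constructor
  · intro h v hv
    have := h (-v) (by simpa using (hkey (-v)).2 (by simpa using hv))
    rw [inner_neg_left] at this
    linarith
  · intro h u hu
    have := h (x := -u) ((hkey u).1 hu)
    rw [inner_neg_left] at this
    linarith
end
end

section
/- Let L be a polytope contained in an affine subspace G of ℝⁿ with direction G₀. Then the union of the relative normal cones N_G(L, v) over all vertices v of L equals G₀. -/
open scoped RealInnerProductSpace
noncomputable section

theorem iUnion_relNormalCone_vertices_eq_direction
    (n : ℕ) (s : Finset (EuclideanSpace ℝ (Fin n))) (hs : s.Nonempty)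
    (G : AffineSubspace ℝ (EuclideanSpace ℝ (Fin n)))
    (L : Set (EuclideanSpace ℝ (Fin n)))
    (hL : L = convexHull ℝ (↑s : Set (EuclideanSpace ℝ (Fin n))))
    (hLG : L ⊆ (G : Set (EuclideanSpace ℝ (Fin n)))) :
    (⋃ v ∈ Set.extremePoints ℝ L,
        {u | u ∈ G.direction ∧ ∀ z ∈ L, ⟪z - v, u⟫ ≤ 0})
      = (G.direction : Set (EuclideanSpace ℝ (Fin n))) := by
  apply Set.Subset.antisymm
  · intro u hu
    simp only [Set.mem_iUnion, Set.mem_setOf_eq] at hu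
    obtain ⟨v, _, hu, _⟩ := hu
    exact hu
  · intro u hu
    -- maximize ⟪·, u⟫ over L
    have hLne : L.Nonempty := by
      obtain ⟨x, hx⟩ := hs
      exact ⟨x, hL ▸ subset_convexHull ℝ _ hx⟩
    have hLcomp : IsCompact L := hL ▸ s.finite_toSet.isCompact_convexHull ℝ
    set f : EuclideanSpace ℝ (Fin n) →L[ℝ] ℝ := innerSL ℝ u
    set B : Set (EuclideanSpace ℝ (Fin n)) := {x ∈ L | ∀ y ∈ L, f y ≤ f x} with hB
    have hexp : IsExposed ℝ L B := fun _ => ⟨f, rfl⟩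
    have hBne : B.Nonempty := by
      obtain ⟨x, hxL, hx⟩ := hLcomp.exists_isMaxOn hLne f.continuous.continuousOn
      exact ⟨x, hxL, hx⟩
    have hBcomp : IsCompact B := hexp.isCompact hLcomp
    obtain ⟨w, hw⟩ := hBcomp.extremePoints_nonempty hBne
    have hwL : w ∈ Set.extremePoints ℝ L :=
      hexp.isExtreme.extremePoints_subset_extremePoints hw
    have hwB : w ∈ B := hw.1
    simp only [Set.mem_iUnion, Set.mem_setOf_eq]
    refine ⟨w, hwL, hu, fun z hz => ?_⟩
    have := hwB.2 z hz
    simp only [f, innerSL_apply_apply] at this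
    rw [inner_sub_left]
    have h1 := real_inner_comm u z
    have h2 := real_inner_comm u w
    linarith
end
end

section
/- For any d-dimensional linear subspace E ⊆ ℝⁿ (1 ≤ d ≤ n-1), the d-dimensional volume of the orthogonal projection of the cross-polytope B₁ⁿ onto E satisfies Vol_d(P_E B₁ⁿ)^{1/d} ≥ c/√(nd) for a universal constant c > 0 (one may take c so that Vol_d(P_E B₁ⁿ) ≥ Vol_d(n^{-1/2} B₂^d)). -/
open scoped RealInnerProductSpace
open MeasureTheory
noncomputable section

/-- The unit ball of ℓ₁ⁿ. -/
def crossPolytope (n : ℕ) : Set (EuclideanSpace ℝ (Fin n)) :=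
  {x | ∑ i, |x i| ≤ 1}

/-- Lower bound for Hausdorff measure on Euclidean space by Lebesgue measure of the
corresponding set in the sup-norm product space. -/
lemma aux_hm_lower (k : ℕ) (s : Set (EuclideanSpace ℝ (Fin k))) :
    volume ((WithLp.equiv 2 (Fin k → ℝ)) '' s) ≤ μH[(k : ℝ)] s := by
  have hpi : (μH[(k : ℝ)] : Measure (Fin k → ℝ)) = volume := by
    simpa using MeasureTheory.hausdorffMeasure_pi_real (ι := Fin k)
  have h := (PiLp.lipschitzWith_ofLp 2 (fun _ : Fin k => ℝ)).hausdorffMeasure_image_le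
    (d := (k : ℝ)) (Nat.cast_nonneg k) s
  rw [hpi] at h
  simpa using h

/-- Finiteness of the `k`-dimensional Hausdorff measure of a bounded subset of
`k`-dimensional Euclidean space. -/
lemma aux_hm_fin (k : ℕ) (s : Set (EuclideanSpace ℝ (Fin k)))
    (hs : Bornology.IsBounded s) : μH[(k : ℝ)] s ≠ ⊤ := by
  have hpi : (μH[(k : ℝ)] : Measure (Fin k → ℝ)) = volume := by
    simpa using MeasureTheory.hausdorffMeasure_pi_real (ι := Fin k)
  have h := (PiLp.antilipschitzWith_ofLp 2 (fun _ : Fin k => ℝ)).le_hausdorffMeasure_image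
    (d := (k : ℝ)) (Nat.cast_nonneg k) s
  rw [hpi] at h
  have himb : Bornology.IsBounded ((WithLp.equiv 2 (Fin k → ℝ)) '' s) :=
    (PiLp.lipschitzWith_ofLp 2 (fun _ : Fin k => ℝ)).isBounded_image hs
  have hvol : volume ((WithLp.equiv 2 (Fin k → ℝ)) '' s) < ⊤ := himb.measure_lt_top
  have hK : ((((Fintype.card (Fin k) : NNReal)) ^ ((1 : ENNReal) / 2).toReal : NNReal) : ENNReal)
      ^ (k : ℝ) < ⊤ :=
    ENNReal.rpow_lt_top_of_nonneg (Nat.cast_nonneg k) ENNReal.coe_ne_top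
  exact ne_top_of_le_ne_top (ENNReal.mul_lt_top hK hvol).ne h

theorem volume_of_projection_of_crossPolytope_lower_bound :
    ∃ c > 0, ∀ (n d : ℕ) (E : Submodule ℝ (EuclideanSpace ℝ (Fin n))),
      1 ≤ d → d ≤ n - 1 → Module.finrank ℝ E = d →
      c / Real.sqrt (n * d) ≤
        ((μH[d] ((fun x => (Submodule.orthogonalProjection E x : EuclideanSpace ℝ (Fin n))) ''
            crossPolytope n)).toReal) ^ ((1 : ℝ) / d) := by
  refine ⟨1, one_pos, ?_⟩
  intro n d E hd1 hdn hrank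
  subst hrank
  set k := Module.finrank ℝ E with hk
  have hk1 : 1 ≤ k := hd1
  have hn2 : 2 ≤ n := by omega
  have hkR : (0 : ℝ) < k := by exact_mod_cast hk1
  have hnR : (0 : ℝ) < n := by positivity
  have hnk : (0 : ℝ) < (n : ℝ) * k := by positivity
  set a : ℝ := 1 / Real.sqrt ((n : ℝ) * k) with ha
  have hapos : 0 < a := by
    rw [ha]; positivity
  have ha2 : a ^ 2 = 1 / ((n : ℝ) * k) := by
    rw [ha, div_pow, one_pow, Real.sq_sqrt hnk.le]
  -- the isometric embedding of ℝᵏ onto E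
  set L : EuclideanSpace ℝ (Fin k) →ₗᵢ[ℝ] EuclideanSpace ℝ (Fin n) :=
    (Submodule.subtypeₗᵢ E).comp (stdOrthonormalBasis ℝ E).repr.symm.toLinearIsometry with hL
  have hLmem : ∀ y, (L y : EuclideanSpace ℝ (Fin n)) ∈ E := fun y => Submodule.coe_mem _
  -- the small cube
  set cube : Set (EuclideanSpace ℝ (Fin k)) := {y | ∀ i, y i ∈ Set.Icc (-a) a} with hcube
  set P : EuclideanSpace ℝ (Fin n) → EuclideanSpace ℝ (Fin n) :=
    fun x => (Submodule.orthogonalProjection E x : EuclideanSpace ℝ (Fin n)) with hP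
  -- step 1 : L '' cube ⊆ P '' crossPolytope n
  have hsub : L '' cube ⊆ P '' crossPolytope n := by
    rintro _ ⟨y, hy, rfl⟩
    have hyc : ∀ i, |y i| ≤ a := fun i => abs_le.mpr ⟨(hy i).1, (hy i).2⟩
    -- the squared norm of y
    have hny : ‖y‖ ^ 2 ≤ (k : ℝ) * a ^ 2 := by
      rw [EuclideanSpace.norm_eq, Real.sq_sqrt (by positivity)]
      calc ∑ i, ‖y i‖ ^ 2 ≤ ∑ _i : Fin k, a ^ 2 :=
            Finset.sum_le_sum fun i _ => by
              rw [Real.norm_eq_abs]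
              exact pow_le_pow_left₀ (abs_nonneg _) (hyc i) 2
        _ = (k : ℝ) * a ^ 2 := by simp [Finset.sum_const, mul_comm]
    have hsum2 : ∑ i, ((L y : EuclideanSpace ℝ (Fin n)) i) ^ 2 = ‖y‖ ^ 2 := by
      rw [← L.norm_map y, EuclideanSpace.norm_eq, Real.sq_sqrt (by positivity)]
      simp [Real.norm_eq_abs, sq_abs]
    have hcs : (∑ i, |(L y : EuclideanSpace ℝ (Fin n)) i|) ^ 2 ≤
        (n : ℝ) * ∑ i, ((L y : EuclideanSpace ℝ (Fin n)) i) ^ 2 := by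
      have := sq_sum_le_card_mul_sum_sq (s := Finset.univ)
        (f := fun i => |(L y : EuclideanSpace ℝ (Fin n)) i|)
      simpa [sq_abs] using this
    have hx1 : L y ∈ crossPolytope n := by
      show ∑ i, |(L y : EuclideanSpace ℝ (Fin n)) i| ≤ 1
      have h0 : (0 : ℝ) ≤ ∑ i, |(L y : EuclideanSpace ℝ (Fin n)) i| :=
        Finset.sum_nonneg fun i _ => abs_nonneg _
      have hsq : (∑ i, |(L y : EuclideanSpace ℝ (Fin n)) i|) ^ 2 ≤ 1 := by
        have : (n : ℝ) * ∑ i, ((L y : EuclideanSpace ℝ (Fin n)) i) ^ 2 ≤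
            (n : ℝ) * ((k : ℝ) * a ^ 2) := by
          rw [hsum2]; exact mul_le_mul_of_nonneg_left hny hnR.le
        have heq : (n : ℝ) * ((k : ℝ) * a ^ 2) = 1 := by
          rw [ha2]; field_simp
        nlinarith
      nlinarith
    exact ⟨L y, hx1, congrArg Subtype.val (Submodule.orthogonalProjection_mem_subspace_eq_self (K := E) ⟨L y, hLmem y⟩)⟩
  -- step 2 : lower bound on the Hausdorff measure of L '' cube
  have hiso : Isometry L := L.isometry
  have hcube_img : (WithLp.equiv 2 (Fin k → ℝ)) '' cube =
      Set.univ.pi (fun _ : Fin k => Set.Icc (-a) a) := by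
    ext z
    constructor
    · rintro ⟨y, hy, rfl⟩ i _
      exact hy i
    · intro hz
      exact ⟨WithLp.toLp 2 z, fun i => hz i (Set.mem_univ i), rfl⟩
  have hvolcube : volume ((WithLp.equiv 2 (Fin k → ℝ)) '' cube) =
      (ENNReal.ofReal (2 * a)) ^ k := by
    rw [hcube_img, volume_pi_pi]
    simp only [Real.volume_Icc, Finset.prod_const, Finset.card_univ, Fintype.card_fin]
    congr 2
    ring
  have hlow : (ENNReal.ofReal (2 * a)) ^ k ≤ μH[(k : ℝ)] (P '' crossPolytope n) := by
    calc (ENNReal.ofReal (2 * a)) ^ k = volume ((WithLp.equiv 2 (Fin k → ℝ)) '' cube) :=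
          hvolcube.symm
      _ ≤ μH[(k : ℝ)] cube := aux_hm_lower k cube
      _ = μH[(k : ℝ)] (L '' cube) := (hiso.hausdorffMeasure_image
          (Or.inl (Nat.cast_nonneg k)) cube).symm
      _ ≤ μH[(k : ℝ)] (P '' crossPolytope n) := measure_mono hsub
  -- step 3 : finiteness
  have hsubU : P '' crossPolytope n ⊆ L '' Metric.closedBall 0 1 := by
    rintro _ ⟨x, hx, rfl⟩
    have hxE : P x ∈ E := Submodule.coe_mem _
    refine ⟨(stdOrthonormalBasis ℝ E).repr ⟨P x, hxE⟩, ?_, ?_⟩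
    · rw [Metric.mem_closedBall, dist_zero_right]
      rw [(stdOrthonormalBasis ℝ E).repr.norm_map]
      have h1 : ‖(⟨P x, hxE⟩ : E)‖ = ‖P x‖ := rfl
      rw [h1]
      -- ‖P x‖ ≤ ‖x‖ ≤ ∑ |x i| ≤ 1
      have hPle : ‖P x‖ ≤ ‖x‖ := by
        have := (Submodule.orthogonalProjection E).le_opNorm x
        have hno := Submodule.orthogonalProjection_norm_le E
        have : ‖Submodule.orthogonalProjection E x‖ ≤ ‖x‖ := by
          calc ‖Submodule.orthogonalProjection E x‖ ≤ ‖Submodule.orthogonalProjection E‖ * ‖x‖ :=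
                (Submodule.orthogonalProjection E).le_opNorm x
            _ ≤ 1 * ‖x‖ := mul_le_mul_of_nonneg_right hno (norm_nonneg x)
            _ = ‖x‖ := one_mul _
        exact this
      have hx2 : ‖x‖ ≤ ∑ i, |x i| := by
        rw [EuclideanSpace.norm_eq]
        have h2 : ∑ i, ‖x i‖ ^ 2 ≤ (∑ i, |x i|) ^ 2 := by
          have := Finset.sum_sq_le_sq_sum_of_nonneg (s := Finset.univ)
            (f := fun i => |x i|) (fun i _ => abs_nonneg _)
          simpa [Real.norm_eq_abs] using this
        calc Real.sqrt (∑ i, ‖x i‖ ^ 2) ≤ Real.sqrt ((∑ i, |x i|) ^ 2) :=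
              Real.sqrt_le_sqrt h2
          _ = ∑ i, |x i| := Real.sqrt_sq (Finset.sum_nonneg fun i _ => abs_nonneg _)
      exact hPle.trans (hx2.trans hx)
    · show (L _ : EuclideanSpace ℝ (Fin n)) = P x
      simp [hL]
  have hfin : μH[(k : ℝ)] (P '' crossPolytope n) ≠ ⊤ := by
    refine ne_top_of_le_ne_top ?_ (measure_mono hsubU)
    rw [hiso.hausdorffMeasure_image (Or.inl (Nat.cast_nonneg k))]
    exact aux_hm_fin k _ Metric.isBounded_closedBall
  -- step 4 : conclusion
  have hLB : (2 * a) ^ k ≤ (μH[(k : ℝ)] (P '' crossPolytope n)).toReal := by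
    have := ENNReal.toReal_mono hfin hlow
    rwa [ENNReal.toReal_pow, ENNReal.toReal_ofReal (by positivity)] at this
  calc (1 : ℝ) / Real.sqrt ((n : ℝ) * k) = a := ha.symm
    _ ≤ 2 * a := by linarith
    _ = ((2 * a) ^ k) ^ ((1 : ℝ) / k) := by
        rw [one_div, Real.pow_rpow_inv_natCast (by positivity) (by omega)]
    _ ≤ ((μH[(k : ℝ)] (P '' crossPolytope n)).toReal) ^ ((1 : ℝ) / k) :=
        Real.rpow_le_rpow (by positivity) hLB (by positivity)
end
end

section
/- Let K ⊆ ℝⁿ be an isotropic convex body, H = e_n^⊥, and S(K) its Steiner symmetrization with respect to H. Then L_{S(K)} = σ^{1/n} L_K where σ² = (∫_{S(K)} ⟨x,e_n⟩² dx)/L_K²; in particular L_{S(K)} ≤ L_K. -/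
open scoped RealInnerProductSpace
open MeasureTheory
noncomputable section

/-- The last standard basis vector `eₙ` of `ℝ^(n+1)`. -/
def eLast (n : ℕ) : EuclideanSpace ℝ (Fin (n + 1)) := EuclideanSpace.single (Fin.last n) 1

/-- The point obtained from `x` by replacing its `eₙ`-coordinate with `t`. -/
def ptAt (n : ℕ) (x : EuclideanSpace ℝ (Fin (n + 1))) (t : ℝ) :
    EuclideanSpace ℝ (Fin (n + 1)) :=
  x + (t - ⟪x, eLast n⟫) • eLast n

def psiE (n : ℕ) : EuclideanSpace ℝ (Fin (n + 1)) ≃ᵐ ℝ × (Fin n → ℝ) :=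
  (MeasurableEquiv.toLp 2 (Fin (n+1) → ℝ)).symm.trans
    (MeasurableEquiv.piFinSuccAbove (fun _ => ℝ) (Fin.last n))

lemma psiE_mp (n : ℕ) : MeasurePreserving (psiE n) volume volume :=
  (MeasureTheory.volume_preserving_piFinSuccAbove (fun _ : Fin (n+1) => ℝ) (Fin.last n)).comp
    (EuclideanSpace.volume_preserving_symm_measurableEquiv_toLp (Fin (n+1)))

lemma psiE_symm_apply (n : ℕ) (p : ℝ × (Fin n → ℝ)) (j : Fin (n+1)) :
    (psiE n).symm p j = Fin.insertNth (α := fun _ => ℝ) (Fin.last n) p.1 p.2 j := by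
  rfl

lemma psiE_symm_last (n : ℕ) (p : ℝ × (Fin n → ℝ)) :
    (psiE n).symm p (Fin.last n) = p.1 := by
  rw [psiE_symm_apply, Fin.insertNth_apply_same]

lemma psiE_symm_castSucc (n : ℕ) (p : ℝ × (Fin n → ℝ)) (k : Fin n) :
    (psiE n).symm p k.castSucc = p.2 k := by
  rw [psiE_symm_apply, ← Fin.succAbove_last, Fin.insertNth_apply_succAbove]

lemma inner_single' (n : ℕ) (x : EuclideanSpace ℝ (Fin (n+1))) (i : Fin (n+1)) :
    ⟪x, EuclideanSpace.single i 1⟫ = x i := by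
  rw [EuclideanSpace.inner_single_right]; simp

lemma inner_eLast (n : ℕ) (x : EuclideanSpace ℝ (Fin (n+1))) :
    ⟪x, eLast n⟫ = x (Fin.last n) := inner_single' n x _

lemma ptAt_apply (n : ℕ) (x : EuclideanSpace ℝ (Fin (n+1))) (t : ℝ) (j : Fin (n+1)) :
    ptAt n x t j = if j = Fin.last n then t else x j := by
  simp only [ptAt, PiLp.add_apply, PiLp.smul_apply, inner_single', smul_eq_mul, eLast,
    EuclideanSpace.single_apply]
  split_ifs with h
  · subst h; ring
  · ring

lemma ptAt_psiE_symm (n : ℕ) (p : ℝ × (Fin n → ℝ)) (s : ℝ) :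
    ptAt n ((psiE n).symm p) s = (psiE n).symm (s, p.2) := by
  ext j
  rw [ptAt_apply]
  induction j using Fin.lastCases with
  | last => simp [psiE_symm_last]
  | cast k => simp [psiE_symm_castSucc, (Fin.castSucc_lt_last k).ne]

lemma fubini_section (n : ℕ) {S : Set (ℝ × (Fin n → ℝ))} (hS : MeasurableSet S)
    {F : ℝ × (Fin n → ℝ) → ℝ} (hF : Integrable (S.indicator F)) :
    ∫ p in S, F p = ∫ y, ∫ t in {t | (t, y) ∈ S}, F (t, y) := by
  rw [← integral_indicator hS, Measure.volume_eq_prod,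
    integral_prod_symm _ (by rw [← Measure.volume_eq_prod]; exact hF)]
  refine integral_congr_ae (Filter.Eventually.of_forall fun y => ?_)
  show (∫ x : ℝ, S.indicator F (x, y)) = ∫ t in (fun t => (t, y)) ⁻¹' S, F (t, y)
  rw [← integral_indicator (hS.preimage measurable_prodMk_right)]
  rfl

lemma integrableOn_box (n : ℕ) (R : ℝ) {F : ℝ × (Fin n → ℝ) → ℝ} (hF : Continuous F)
    {S : Set (ℝ × (Fin n → ℝ))}
    (hS : S ⊆ Set.Icc (-R) R ×ˢ Set.univ.pi fun _ => Set.Icc (-R) R) :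
    IntegrableOn F S := by
  have hcompact : IsCompact (Set.Icc (-R) R ×ˢ Set.univ.pi fun _ : Fin n => Set.Icc (-R) R) :=
    isCompact_Icc.prod (isCompact_univ_pi fun _ => isCompact_Icc)
  exact (hF.continuousOn.integrableOn_compact hcompact).mono_set hS

lemma integral_id_symm_Icc {a : ℝ} (ha : 0 ≤ a) : ∫ t in Set.Icc (-a) a, t = 0 := by
  rw [MeasureTheory.integral_Icc_eq_integral_Ioc,
    ← intervalIntegral.integral_of_le (by linarith : -a ≤ a), integral_id]
  ring

lemma symm_interval_min {R : ℝ} (hR : 0 ≤ R) {C : Set ℝ} (hC : MeasurableSet C)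
    (hCb : C ⊆ Set.Icc (-R) R) :
    ∫ t in Set.Icc (-((volume C).toReal / 2)) ((volume C).toReal / 2), t ^ 2
      ≤ ∫ t in C, t ^ 2 := by
  set m := (volume C).toReal with hm
  have hCfin : volume C ≠ ⊤ := ((measure_mono hCb).trans_lt isCompact_Icc.measure_lt_top).ne
  have hm0 : 0 ≤ m := ENNReal.toReal_nonneg
  have hmR : m ≤ 2 * R := by
    have h1 : volume C ≤ volume (Set.Icc (-R) R) := measure_mono hCb
    rw [Real.volume_Icc] at h1
    calc m ≤ (ENNReal.ofReal (R - -R)).toReal := ENNReal.toReal_mono ENNReal.ofReal_ne_top h1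
    _ = R - -R := ENNReal.toReal_ofReal (by linarith)
    _ = 2 * R := by ring
  set J := Set.Icc (-(m / 2)) (m / 2) with hJ
  have hJm : MeasurableSet J := measurableSet_Icc
  have hJvol : volume J = volume C := by
    rw [hJ, Real.volume_Icc, show m / 2 - -(m / 2) = m by ring, hm,
      ENNReal.ofReal_toReal hCfin]
  have hJR : J ⊆ Set.Icc (-R) R := Set.Icc_subset_Icc (by linarith) (by linarith)
  have hint : ∀ S : Set ℝ, S ⊆ Set.Icc (-R) R → IntegrableOn (fun t => t ^ 2) S := by
    intro S hSsub
    exact (((continuous_pow 2).continuousOn).integrableOn_compact isCompact_Icc).mono_set hSsub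
  have hkey : volume (J \ C) = volume (C \ J) := by
    have h1 : volume (J ∩ C) + volume (J \ C) = volume J := measure_inter_add_diff J hC
    have h2 : volume (J ∩ C) + volume (C \ J) = volume C := by
      rw [Set.inter_comm]; exact measure_inter_add_diff C hJm
    have hfin : volume (J ∩ C) ≠ ⊤ := by
      refine ((measure_mono Set.inter_subset_right).trans_lt hCfin.lt_top).ne
    exact (ENNReal.add_right_inj hfin).mp (h1.trans (hJvol.trans h2.symm))
  have hsplitJ : ∫ t in J, t ^ 2 = (∫ t in J ∩ C, t ^ 2) + ∫ t in J \ C, t ^ 2 := by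
    rw [← setIntegral_union (disjoint_sdiff_self_right.mono_left Set.inter_subset_right)
      (hJm.diff hC) (hint _ (Set.inter_subset_left.trans hJR))
      (hint _ (Set.diff_subset.trans hJR)), Set.inter_union_diff]
  have hsplitC : ∫ t in C, t ^ 2 = (∫ t in J ∩ C, t ^ 2) + ∫ t in C \ J, t ^ 2 := by
    rw [Set.inter_comm J C]
    rw [← setIntegral_union (disjoint_sdiff_self_right.mono_left Set.inter_subset_right)
      (hC.diff hJm) (hint _ (Set.inter_subset_left.trans hCb))
      (hint _ (Set.diff_subset.trans hCb)), Set.inter_union_diff]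
  have hb1 : ∫ t in J \ C, t ^ 2 ≤ (m / 2) ^ 2 * (volume (J \ C)).toReal := by
    calc ∫ t in J \ C, t ^ 2 ≤ ∫ _t in J \ C, (m / 2) ^ 2 := by
          refine setIntegral_mono_on (hint _ (Set.diff_subset.trans hJR))
            (integrableOn_const ?_) (hJm.diff hC) ?_
          · exact ((measure_mono Set.diff_subset).trans_lt (hJvol ▸ hCfin.lt_top)).ne
          · intro t ht
            have h := ht.1
            exact sq_le_sq' h.1 h.2
    _ = (m / 2) ^ 2 * (volume (J \ C)).toReal := by
          rw [setIntegral_const]; rw [smul_eq_mul, mul_comm]; rfl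
  have hb2 : (m / 2) ^ 2 * (volume (C \ J)).toReal ≤ ∫ t in C \ J, t ^ 2 := by
    calc (m / 2) ^ 2 * (volume (C \ J)).toReal = ∫ _t in C \ J, (m / 2) ^ 2 := by
          rw [setIntegral_const]; rw [smul_eq_mul, mul_comm]; rfl
    _ ≤ ∫ t in C \ J, t ^ 2 := by
          refine setIntegral_mono_on (integrableOn_const ?_)
            (hint _ (Set.diff_subset.trans hCb)) (hC.diff hJm) ?_
          · exact ((measure_mono Set.diff_subset).trans_lt hCfin.lt_top).ne
          · intro t ht
            have h : ¬(-(m / 2) ≤ t ∧ t ≤ m / 2) := by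
              simpa [hJ, Set.mem_Icc] using ht.2
            have habs : m / 2 ≤ |t| := by
              rcases not_and_or.mp h with h' | h'
              · rw [abs_of_nonpos (by push_neg at h'; linarith)]; push_neg at h'; linarith
              · rw [abs_of_nonneg (by push_neg at h'; linarith)]; push_neg at h'; linarith
            calc (m / 2) ^ 2 ≤ |t| ^ 2 := by
                  exact pow_le_pow_left₀ (by linarith) habs 2
            _ = t ^ 2 := sq_abs t
  calc ∫ t in Set.Icc (-(m / 2)) (m / 2), t ^ 2
      = (∫ t in J ∩ C, t ^ 2) + ∫ t in J \ C, t ^ 2 := hsplitJ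
  _ ≤ (∫ t in J ∩ C, t ^ 2) + (m / 2) ^ 2 * (volume (J \ C)).toReal := by linarith
  _ = (∫ t in J ∩ C, t ^ 2) + (m / 2) ^ 2 * (volume (C \ J)).toReal := by rw [hkey]
  _ ≤ (∫ t in J ∩ C, t ^ 2) + ∫ t in C \ J, t ^ 2 := by linarith
  _ = ∫ t in C, t ^ 2 := hsplitC.symm

lemma coord_continuous (n : ℕ) (i : Fin (n+1)) :
    Continuous fun x : EuclideanSpace ℝ (Fin (n+1)) => x i := by
  exact (continuous_apply i).comp (PiLp.continuous_ofLp (p := 2) (β := fun _ : Fin (n+1) => ℝ))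

/-- The Steiner symmetrization of `K` with respect to the hyperplane `eₙ^⊥`. -/
def steiner (n : ℕ) (K : Set (EuclideanSpace ℝ (Fin (n + 1)))) :
    Set (EuclideanSpace ℝ (Fin (n + 1))) :=
  {x | (∃ t, ptAt n x t ∈ K) ∧
    |⟪x, eLast n⟫| ≤ (1 / 2) * (volume {t : ℝ | ptAt n x t ∈ K}).toReal}

lemma steiner_preimage (n : ℕ) (K : Set (EuclideanSpace ℝ (Fin (n + 1))))
    (p : ℝ × (Fin n → ℝ)) :
    p ∈ (psiE n).symm ⁻¹' (steiner n K) ↔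
      ((∃ s, (psiE n).symm (s, p.2) ∈ K) ∧
        |p.1| ≤ (1 / 2) * (volume {s : ℝ | (psiE n).symm (s, p.2) ∈ K}).toReal) := by
  simp only [Set.mem_preimage, steiner, Set.mem_setOf_eq, ptAt_psiE_symm, inner_eLast,
    psiE_symm_last]

lemma steiner_integrals (n : ℕ) (K : Set (EuclideanSpace ℝ (Fin (n+1))))
    (hcomp : IsCompact K) :
    (∀ i j : Fin n, ∫ x in steiner n K, x i.castSucc * x j.castSucc
        = ∫ x in K, x i.castSucc * x j.castSucc) ∧
    (∀ j : Fin n, ∫ x in steiner n K, x (Fin.last n) * x j.castSucc = 0) ∧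
    (0 ≤ ∫ x in steiner n K, x (Fin.last n) * x (Fin.last n)) ∧
    (∫ x in steiner n K, x (Fin.last n) * x (Fin.last n)
        ≤ ∫ x in K, x (Fin.last n) * x (Fin.last n)) := by
  classical
  obtain ⟨R₀, hR₀⟩ := hcomp.isBounded.subset_closedBall 0
  set R := max R₀ 0 with hRdef
  have hR0 : 0 ≤ R := le_max_right _ _
  have hKR : K ⊆ Metric.closedBall 0 R :=
    hR₀.trans (Metric.closedBall_subset_closedBall (le_max_left _ _))
  have hKm : MeasurableSet K := hcomp.measurableSet
  set K' := (psiE n).symm ⁻¹' K with hK'def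
  have hK'm : MeasurableSet K' := hKm.preimage (psiE n).symm.measurable
  have hcoord : ∀ x ∈ K, ∀ i, |x i| ≤ R := by
    intro x hx i
    have h1 : |⟪x, EuclideanSpace.single i (1:ℝ)⟫| ≤ ‖x‖ * ‖EuclideanSpace.single i (1:ℝ)‖ :=
      abs_real_inner_le_norm x _
    rw [inner_single', EuclideanSpace.norm_single] at h1
    have h2 : ‖x‖ ≤ R := by simpa [Metric.mem_closedBall] using hKR hx
    simpa using h1.trans (by simpa using h2)
  set m : (Fin n → ℝ) → ℝ := fun y => (volume {s : ℝ | (psiE n).symm (s, y) ∈ K}).toReal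
    with hmdef
  have hsect : ∀ y, {s : ℝ | (psiE n).symm (s, y) ∈ K} ⊆ Set.Icc (-R) R := by
    intro y s hs
    have := hcoord _ hs (Fin.last n)
    rw [psiE_symm_last] at this
    exact Set.mem_Icc.mpr (abs_le.mp this)
  have hsectK' : ∀ y, {t : ℝ | (t, y) ∈ K'} = {s : ℝ | (psiE n).symm (s, y) ∈ K} := fun y => rfl
  have hsectfin : ∀ y, volume {s : ℝ | (psiE n).symm (s, y) ∈ K} ≠ ⊤ := fun y =>
    ((measure_mono (hsect y)).trans_lt isCompact_Icc.measure_lt_top).ne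
  have hmmeas : Measurable m := by
    have h1 : Measurable fun y : Fin n → ℝ => volume ((fun t => (t, y)) ⁻¹' K') :=
      measurable_measure_prodMk_right hK'm
    exact h1.ennreal_toReal
  have hm0 : ∀ y, 0 ≤ m y := fun _ => ENNReal.toReal_nonneg
  have hmR : ∀ y, m y / 2 ≤ R := by
    intro y
    have h1 : volume {s : ℝ | (psiE n).symm (s, y) ∈ K} ≤ volume (Set.Icc (-R) R) :=
      measure_mono (hsect y)
    rw [Real.volume_Icc] at h1
    have h2 : m y ≤ R - -R := by
      calc m y ≤ (ENNReal.ofReal (R - -R)).toReal := ENNReal.toReal_mono ENNReal.ofReal_ne_top h1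
      _ = R - -R := ENNReal.toReal_ofReal (by linarith)
    linarith
  set B := Set.univ.pi fun _ : Fin n => Set.Icc (-R) R with hBdef
  have hBm : MeasurableSet B := MeasurableSet.univ_pi fun _ => measurableSet_Icc
  set A := {p : ℝ × (Fin n → ℝ) | p.2 ∈ B ∧ |p.1| ≤ m p.2 / 2} with hAdef
  have hAm : MeasurableSet A := by
    have h1 : MeasurableSet {p : ℝ × (Fin n → ℝ) | p.2 ∈ B} := hBm.preimage measurable_snd
    have h2 : MeasurableSet {p : ℝ × (Fin n → ℝ) | |p.1| ≤ m p.2 / 2} :=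
      measurableSet_le measurable_fst.abs ((hmmeas.comp measurable_snd).div_const 2)
    exact h1.inter h2
  have hAbox : A ⊆ Set.Icc (-R) R ×ˢ B := by
    rintro ⟨t, y⟩ ⟨hy, ht⟩
    exact ⟨Set.mem_Icc.mpr (abs_le.mp (ht.trans (hmR y))), hy⟩
  have hK'box : K' ⊆ Set.Icc (-R) R ×ˢ B := by
    rintro ⟨t, y⟩ hp
    refine ⟨hsect y hp, ?_⟩
    intro k _
    have := hcoord _ hp k.castSucc
    rw [psiE_symm_castSucc] at this
    exact Set.mem_Icc.mpr (abs_le.mp this)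
  have hyB : ∀ y, y ∉ B → m y = 0 := by
    intro y hy
    have hempty : {s : ℝ | (psiE n).symm (s, y) ∈ K} = ∅ := by
      by_contra h
      obtain ⟨s, hs⟩ := Set.nonempty_iff_ne_empty.mpr h
      refine hy fun k _ => ?_
      have := hcoord _ hs k.castSucc
      rw [psiE_symm_castSucc] at this
      exact Set.mem_Icc.mpr (abs_le.mp this)
    rw [hmdef]; simp [hempty]
  have hAe : (psiE n).symm ⁻¹' (steiner n K) =ᵐ[volume] A := by
    rw [ae_eq_set]
    constructor
    · refine measure_mono_null (fun p hp => ?_) (measure_empty (μ := volume))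
      exfalso
      obtain ⟨hmem, hnot⟩ := hp
      obtain ⟨⟨s, hs⟩, hle⟩ := (steiner_preimage n K p).mp hmem
      refine hnot ⟨?_, by rw [hmdef]; linarith⟩
      intro k _
      have := hcoord _ hs k.castSucc
      rw [psiE_symm_castSucc] at this
      exact Set.mem_Icc.mpr (abs_le.mp this)
    · refine measure_mono_null (fun p hp => ?_)
        (show volume {p : ℝ × (Fin n → ℝ) | p.1 = 0} = 0 from ?_)
      · obtain ⟨⟨hyB', hle⟩, hnot⟩ := hp
        show p.1 = 0
        by_cases hex : ∃ s, (psiE n).symm (s, p.2) ∈ K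
        · refine absurd ((steiner_preimage n K p).mpr ⟨hex, ?_⟩) hnot
          have hle' : |p.1| ≤ (volume {s : ℝ | (psiE n).symm (s, p.2) ∈ K}).toReal / 2 := hle
          linarith
        · have : {s : ℝ | (psiE n).symm (s, p.2) ∈ K} = ∅ :=
            Set.eq_empty_iff_forall_notMem.mpr fun s hs => hex ⟨s, hs⟩
          have hm' : m p.2 = 0 := by rw [hmdef]; simp [this]
          rw [hm'] at hle
          simpa using abs_nonpos_iff.mp (by linarith)
      · have : {p : ℝ × (Fin n → ℝ) | p.1 = 0} = ({0} : Set ℝ) ×ˢ Set.univ := by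
          ext ⟨t, y⟩; simp [Set.mem_prod, eq_comm]
        rw [this, Measure.volume_eq_prod, Measure.prod_prod]
        simp
  have hψs : MeasurePreserving (psiE n).symm volume volume := (psiE_mp n).symm (psiE n)
  have htransS : ∀ f : EuclideanSpace ℝ (Fin (n+1)) → ℝ,
      ∫ x in steiner n K, f x = ∫ p in A, f ((psiE n).symm p) := by
    intro f
    rw [← hψs.setIntegral_preimage_emb (psiE n).symm.measurableEmbedding f (steiner n K)]
    exact setIntegral_congr_set hAe
  have htransK : ∀ f : EuclideanSpace ℝ (Fin (n+1)) → ℝ,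
      ∫ x in K, f x = ∫ p in K', f ((psiE n).symm p) :=
    fun f => (hψs.setIntegral_preimage_emb (psiE n).symm.measurableEmbedding f K).symm
  have hsectA : ∀ y, {t : ℝ | (t, y) ∈ A}
      = if y ∈ B then Set.Icc (-(m y / 2)) (m y / 2) else ∅ := by
    intro y
    split_ifs with h
    · ext t; simp [hAdef, h, abs_le, Set.mem_Icc]
    · ext t; simp [hAdef, h]
  have hsectAvol : ∀ y, (volume {t : ℝ | (t, y) ∈ A}).toReal = m y := by
    intro y
    rw [hsectA]
    split_ifs with h
    · rw [Real.volume_Icc, show m y / 2 - -(m y / 2) = m y by ring,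
        ENNReal.toReal_ofReal (hm0 y)]
    · simp [hyB y h]
  have hintA : ∀ F : ℝ × (Fin n → ℝ) → ℝ, Continuous F → Integrable (A.indicator F) := by
    intro F hF
    exact (integrable_indicator_iff hAm).2 (integrableOn_box n R hF hAbox)
  have hintK' : ∀ F : ℝ × (Fin n → ℝ) → ℝ, Continuous F → Integrable (K'.indicator F) := by
    intro F hF
    exact (integrable_indicator_iff hK'm).2 (integrableOn_box n R hF hK'box)
  have hcont1 : ∀ i j : Fin n, Continuous fun p : ℝ × (Fin n → ℝ) => p.2 i * p.2 j :=
    fun i j => ((continuous_apply i).comp continuous_snd).mul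
      ((continuous_apply j).comp continuous_snd)
  have hcont2 : ∀ j : Fin n, Continuous fun p : ℝ × (Fin n → ℝ) => p.1 * p.2 j :=
    fun j => continuous_fst.mul ((continuous_apply j).comp continuous_snd)
  have hcont3 : Continuous fun p : ℝ × (Fin n → ℝ) => p.1 * p.1 := continuous_fst.mul continuous_fst
  have hsectAmeas : ∀ y : Fin n → ℝ, MeasurableSet {t : ℝ | (t, y) ∈ A} := fun y =>
    hAm.preimage measurable_prodMk_right
  have hsectK'meas : ∀ y : Fin n → ℝ, MeasurableSet {t : ℝ | (t, y) ∈ K'} := fun y =>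
    hK'm.preimage measurable_prodMk_right
  refine ⟨?_, ?_, ?_, ?_⟩
  · intro i j
    have e1 : ∫ x in steiner n K, x i.castSucc * x j.castSucc = ∫ y, y i * y j * m y := by
      rw [htransS]
      simp only [psiE_symm_castSucc]
      rw [fubini_section n hAm (hintA _ (hcont1 i j))]
      refine integral_congr_ae (Filter.Eventually.of_forall fun y => ?_)
      show (∫ _t in {t : ℝ | (t, y) ∈ A}, y i * y j) = y i * y j * m y
      rw [setIntegral_const, smul_eq_mul, measureReal_def, hsectAvol, mul_comm]
    have e1K : ∫ x in K, x i.castSucc * x j.castSucc = ∫ y, y i * y j * m y := by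
      rw [htransK]
      simp only [psiE_symm_castSucc]
      rw [fubini_section n hK'm (hintK' _ (hcont1 i j))]
      refine integral_congr_ae (Filter.Eventually.of_forall fun y => ?_)
      show (∫ _t in {t : ℝ | (t, y) ∈ K'}, y i * y j) = y i * y j * m y
      rw [setIntegral_const, smul_eq_mul, mul_comm]
      rfl
    rw [e1, e1K]
  · intro j
    rw [htransS]
    simp only [psiE_symm_castSucc, psiE_symm_last]
    rw [fubini_section n hAm (hintA _ (hcont2 j))]
    have hz : ∀ y : Fin n → ℝ, (∫ t in {t : ℝ | (t, y) ∈ A}, t * y j) = 0 := by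
      intro y
      rw [hsectA]
      split_ifs with h
      · rw [MeasureTheory.integral_mul_const, integral_id_symm_Icc (by linarith [hm0 y]),
          zero_mul]
      · simp
    simp only [hz, integral_zero]
  · rw [htransS]
    simp only [psiE_symm_last]
    rw [fubini_section n hAm (hintA _ hcont3)]
    refine integral_nonneg fun y => ?_
    exact setIntegral_nonneg (hsectAmeas y) fun t _ => mul_self_nonneg t
  · have eS : ∫ x in steiner n K, x (Fin.last n) * x (Fin.last n)
        = ∫ y, ∫ t in {t : ℝ | (t, y) ∈ A}, t * t := by
      rw [htransS]
      simp only [psiE_symm_last]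
      exact fubini_section n hAm (hintA _ hcont3)
    have eK : ∫ x in K, x (Fin.last n) * x (Fin.last n)
        = ∫ y, ∫ t in {t : ℝ | (t, y) ∈ K'}, t * t := by
      rw [htransK]
      simp only [psiE_symm_last]
      exact fubini_section n hK'm (hintK' _ hcont3)
    rw [eS, eK]
    have hIntOuter : ∀ (S : Set (ℝ × (Fin n → ℝ))), MeasurableSet S →
        Integrable (S.indicator fun p : ℝ × (Fin n → ℝ) => p.1 * p.1) →
        Integrable (fun y => ∫ t in {t : ℝ | (t, y) ∈ S}, t * t) volume := by
      intro S hSm hSi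
      have h0 : Integrable (S.indicator fun p : ℝ × (Fin n → ℝ) => p.1 * p.1)
          ((volume : Measure ℝ).prod volume) := by
        rw [← Measure.volume_eq_prod]; exact hSi
      refine h0.integral_prod_right.congr (Filter.Eventually.of_forall fun y => ?_)
      show (∫ t : ℝ, S.indicator (fun p : ℝ × (Fin n → ℝ) => p.1 * p.1) (t, y))
          = ∫ t in (fun t : ℝ => (t, y)) ⁻¹' S, t * t
      rw [← integral_indicator (hSm.preimage measurable_prodMk_right)]
      rfl
    refine integral_mono (hIntOuter A hAm (hintA _ hcont3)) (hIntOuter K' hK'm (hintK' _ hcont3))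
      fun y => ?_
    show (∫ t in {t : ℝ | (t, y) ∈ A}, t * t) ≤ ∫ t in {t : ℝ | (t, y) ∈ K'}, t * t
    have hsq : (fun t : ℝ => t * t) = fun t : ℝ => t ^ 2 := funext fun t => (sq t).symm
    rw [hsectA]
    split_ifs with h
    · rw [hsq]
      exact symm_interval_min hR0 (hsectK'meas y) (hsect y)
    · rw [Measure.restrict_empty, integral_zero_measure]
      exact setIntegral_nonneg (hsectK'meas y) fun t _ => mul_self_nonneg t

lemma K_entries (n : ℕ) (K : Set (EuclideanSpace ℝ (Fin (n+1)))) (L : ℝ)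
    (hcomp : IsCompact K)
    (hiso : ∀ θ : EuclideanSpace ℝ (Fin (n + 1)), ‖θ‖ = 1 → ∫ x in K, ⟪x, θ⟫ ^ 2 = L ^ 2)
    (i j : Fin (n+1)) :
    ∫ x in K, x i * x j = if i = j then L ^ 2 else 0 := by
  classical
  have hint : ∀ g : EuclideanSpace ℝ (Fin (n+1)) → ℝ, Continuous g → IntegrableOn g K :=
    fun g hg => hg.continuousOn.integrableOn_compact hcomp
  have hii : ∀ k : Fin (n+1), ∫ x in K, x k * x k = L ^ 2 := by
    intro k
    have h := hiso (EuclideanSpace.single k 1) (by simp [EuclideanSpace.norm_single])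
    rw [← h]
    refine integral_congr_ae (Filter.Eventually.of_forall fun x => ?_)
    simp [inner_single', pow_two]
  split_ifs with hij
  · subst hij; exact hii i
  · have h2pos : (0:ℝ) < Real.sqrt 2 := Real.sqrt_pos.mpr (by norm_num)
    have hθnorm :
        ‖(Real.sqrt 2)⁻¹ • (EuclideanSpace.single i (1:ℝ) + EuclideanSpace.single j 1)‖ = 1 := by
      have hinner : ⟪EuclideanSpace.single i (1:ℝ), EuclideanSpace.single j (1:ℝ)⟫ = 0 := by
        rw [EuclideanSpace.inner_single_left]
        simp [EuclideanSpace.single_apply, hij]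
      have hsq : ‖EuclideanSpace.single i (1:ℝ) + EuclideanSpace.single j 1‖ ^ 2 = 2 := by
        rw [norm_add_sq_real, hinner]
        simp [EuclideanSpace.norm_single]
        norm_num
      have h2 : ‖EuclideanSpace.single i (1:ℝ) + EuclideanSpace.single j 1‖ = Real.sqrt 2 := by
        rw [← Real.sqrt_sq (norm_nonneg _), hsq]
      rw [norm_smul, h2, Real.norm_eq_abs, abs_inv, abs_of_pos h2pos]
      field_simp
    have hexp := hiso _ hθnorm
    have hrw : ∀ x : EuclideanSpace ℝ (Fin (n+1)),
        ⟪x, (Real.sqrt 2)⁻¹ • (EuclideanSpace.single i (1:ℝ) + EuclideanSpace.single j 1)⟫ ^ 2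
          = (x i * x i + x j * x j) / 2 + x i * x j := by
      intro x
      rw [real_inner_smul_right, inner_add_right, inner_single', inner_single', mul_pow,
        inv_pow, Real.sq_sqrt (by norm_num : (0:ℝ) ≤ 2)]
      ring
    have hcong : ∫ x in K,
        ⟪x, (Real.sqrt 2)⁻¹ • (EuclideanSpace.single i (1:ℝ) + EuclideanSpace.single j 1)⟫ ^ 2
          = ∫ x in K, ((x i * x i + x j * x j) / 2 + x i * x j) :=
      integral_congr_ae (Filter.Eventually.of_forall fun x => hrw x)
    have hci : Continuous fun x : EuclideanSpace ℝ (Fin (n+1)) => x i * x i :=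
      (coord_continuous n i).mul (coord_continuous n i)
    have hcj : Continuous fun x : EuclideanSpace ℝ (Fin (n+1)) => x j * x j :=
      (coord_continuous n j).mul (coord_continuous n j)
    have hcij : Continuous fun x : EuclideanSpace ℝ (Fin (n+1)) => x i * x j :=
      (coord_continuous n i).mul (coord_continuous n j)
    have hsplit : ∫ x in K, ((x i * x i + x j * x j) / 2 + x i * x j)
        = ((∫ x in K, x i * x i) + ∫ x in K, x j * x j) / 2 + ∫ x in K, x i * x j := by
      rw [integral_add (hint (fun x => (x i * x i + x j * x j) / 2) ((hci.add hcj).div_const 2)) (hint _ hcij),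
        integral_div, integral_add (hint _ hci) (hint _ hcj)]
    rw [hcong, hsplit, hii i, hii j] at hexp
    linarith

/-- The inertia matrix of a set. -/
def inertiaMatrix (n : ℕ) (A : Set (EuclideanSpace ℝ (Fin (n + 1)))) :
    Matrix (Fin (n + 1)) (Fin (n + 1)) ℝ :=
  fun i j => ∫ x in A, ⟪x, EuclideanSpace.single i 1⟫ * ⟪x, EuclideanSpace.single j 1⟫

theorem isotropy_constant_of_steiner_symmetrization
    (n : ℕ) (K : Set (EuclideanSpace ℝ (Fin (n + 1)))) (L : ℝ) (hL : 0 < L)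
    (hconv : Convex ℝ K) (hcomp : IsCompact K)
    (hvol : volume K = 1) (hbar : (∫ x in K, x) = 0)
    (hiso : ∀ θ : EuclideanSpace ℝ (Fin (n + 1)), ‖θ‖ = 1 → ∫ x in K, ⟪x, θ⟫ ^ 2 = L ^ 2)
    (σ : ℝ) (hσ : σ = Real.sqrt ((∫ x in steiner n K, ⟪x, eLast n⟫ ^ 2) / L ^ 2)) :
    (inertiaMatrix n (steiner n K)).det ^ ((1 : ℝ) / (2 * (n + 1)))
        = σ ^ ((1 : ℝ) / (n + 1)) * L ∧
    (inertiaMatrix n (steiner n K)).det ^ ((1 : ℝ) / (2 * (n + 1))) ≤ L := by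
  classical
  obtain ⟨hoff, hmix, hInn, hIle'⟩ := steiner_integrals n K hcomp
  have hKe := K_entries n K L hcomp hiso
  have hIeq : ∫ x in steiner n K, x (Fin.last n) * x (Fin.last n)
      = ∫ x in steiner n K, ⟪x, eLast n⟫ ^ 2 :=
    integral_congr_ae (Filter.Eventually.of_forall fun x => by
      show x (Fin.last n) * x (Fin.last n) = ⟪x, eLast n⟫ ^ 2
      rw [inner_eLast, pow_two])
  set I : ℝ := ∫ x in steiner n K, ⟪x, eLast n⟫ ^ 2 with hIdef
  have hI0 : 0 ≤ I := by rw [← hIeq]; exact hInn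
  have hIleL : I ≤ L ^ 2 := by
    rw [← hIeq]
    refine hIle'.trans ?_
    rw [show (∫ x in K, x (Fin.last n) * x (Fin.last n)) = L ^ 2 by
      rw [hKe (Fin.last n) (Fin.last n)]; simp]
  have hmat : inertiaMatrix n (steiner n K)
      = Matrix.diagonal (fun k : Fin (n+1) => if k = Fin.last n then I else L ^ 2) := by
    ext a b
    show (∫ x in steiner n K, ⟪x, EuclideanSpace.single a 1⟫ * ⟪x, EuclideanSpace.single b 1⟫)
        = _
    rw [show (∫ x in steiner n K, ⟪x, EuclideanSpace.single a 1⟫ * ⟪x, EuclideanSpace.single b 1⟫)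
        = ∫ x in steiner n K, x a * x b from
      integral_congr_ae (Filter.Eventually.of_forall fun x => by
        show ⟪x, EuclideanSpace.single a 1⟫ * ⟪x, EuclideanSpace.single b 1⟫ = x a * x b
        rw [inner_single', inner_single'])]
    induction a using Fin.lastCases with
    | last =>
      induction b using Fin.lastCases with
      | last => rw [Matrix.diagonal_apply_eq, if_pos rfl]; exact hIeq
      | cast kb =>
        rw [Matrix.diagonal_apply_ne _ (Fin.castSucc_lt_last kb).ne']
        exact hmix kb
    | cast ka =>
      induction b using Fin.lastCases with
      | last =>
        rw [Matrix.diagonal_apply_ne _ (Fin.castSucc_lt_last ka).ne]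
        rw [show (∫ x in steiner n K, x ka.castSucc * x (Fin.last n))
            = ∫ x in steiner n K, x (Fin.last n) * x ka.castSucc from
          integral_congr_ae (Filter.Eventually.of_forall fun x => mul_comm _ _)]
        exact hmix ka
      | cast kb =>
        rw [hoff ka kb, hKe]
        by_cases hab : ka.castSucc = kb.castSucc
        · rw [if_pos hab, hab, Matrix.diagonal_apply_eq,
            if_neg (Fin.castSucc_lt_last kb).ne]
        · rw [if_neg hab, Matrix.diagonal_apply_ne _ hab]
  have hdet : (inertiaMatrix n (steiner n K)).det = (L ^ 2) ^ n * I := by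
    rw [hmat, Matrix.det_diagonal, Fin.prod_univ_castSucc]
    rw [if_pos rfl]
    congr 1
    calc ∏ k : Fin n, (if (k.castSucc = Fin.last n) then I else L ^ 2)
        = ∏ _k : Fin n, L ^ 2 :=
          Finset.prod_congr rfl fun k _ => if_neg (Fin.castSucc_lt_last k).ne
    _ = (L ^ 2) ^ n := by rw [Finset.prod_const, Finset.card_univ, Fintype.card_fin]
  have hc : (0:ℝ) < (n:ℝ) + 1 := by positivity
  have he : (0:ℝ) < 1 / (2 * ((n:ℝ) + 1)) := by positivity
  have hL2 : (0:ℝ) < L ^ 2 := by positivity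
  have hA' : ((L ^ 2) ^ (n + 1) : ℝ) ^ ((1:ℝ) / (2 * ((n:ℝ) + 1))) = L := by
    rw [← pow_mul, ← Real.rpow_natCast L (2 * (n + 1)), ← Real.rpow_mul hL.le]
    rw [show ((2 * (n + 1) : ℕ) : ℝ) * ((1:ℝ) / (2 * ((n:ℝ) + 1))) = 1 by
      push_cast; field_simp]
    exact Real.rpow_one L
  have hmulpow : ((L ^ 2) ^ n : ℝ) ^ ((1:ℝ) / (2 * ((n:ℝ) + 1)))
      * ((L ^ 2) : ℝ) ^ ((1:ℝ) / (2 * ((n:ℝ) + 1))) = L := by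
    rw [← Real.mul_rpow (by positivity) (by positivity), ← pow_succ]
    exact hA'
  constructor
  · rw [hdet, hσ]
    have h1 : Real.sqrt (I / L ^ 2) ^ ((1:ℝ) / ((n:ℝ) + 1))
        = I ^ ((1:ℝ) / (2 * ((n:ℝ) + 1))) / (L ^ 2) ^ ((1:ℝ) / (2 * ((n:ℝ) + 1))) := by
      rw [Real.sqrt_eq_rpow, ← Real.rpow_mul (by positivity : (0:ℝ) ≤ I / L ^ 2)]
      rw [show (1 / (2:ℝ)) * ((1:ℝ) / ((n:ℝ) + 1)) = (1:ℝ) / (2 * ((n:ℝ) + 1)) by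
        rw [div_mul_div_comm]; norm_num]
      exact Real.div_rpow hI0 (sq_nonneg L) _
    rw [Real.mul_rpow (by positivity) hI0, h1]
    have hPne : ((L ^ 2):ℝ) ^ ((1:ℝ) / (2 * ((n:ℝ) + 1))) ≠ 0 :=
      (Real.rpow_pos_of_pos hL2 _).ne'
    field_simp
    linear_combination (I ^ ((1:ℝ) / (2 * ((n:ℝ) + 1)))) * hmulpow
  · rw [hdet]
    calc ((L ^ 2) ^ n * I) ^ ((1:ℝ) / (2 * ((n:ℝ) + 1)))
        ≤ ((L ^ 2) ^ n * L ^ 2) ^ ((1:ℝ) / (2 * ((n:ℝ) + 1))) :=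
          Real.rpow_le_rpow (by positivity)
            (mul_le_mul_of_nonneg_left hIleL (by positivity)) he.le
    _ = ((L ^ 2) ^ (n + 1)) ^ ((1:ℝ) / (2 * ((n:ℝ) + 1))) := by rw [← pow_succ]
    _ = L := hA'
end
end
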